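/- Let X and Y be partial groupoids with anti-involutions ν and ν′ respectively, and let F : X → Y be a map of simplicial sets. Then F ∘ ν = ν′ ∘ F^op as maps X^op → Y; in particular, a simplicial set admits at most one anti-involution making it a partial groupoid. -/

import Mathlib

/-- A (skeletal) simplicial set: a contravariant functor on the simplex category,
with `obj n` the set of `n`-simplices and `map α` the action of an
order-preserving map `α : [m] → [n]`. -/
structure SSet' where
  obj : ℕ → Type
  map : ∀ {m n : ℕ}, (Fin (m + 1) →o Fin (n + 1)) → obj n → obj m
  map_id : ∀ (n : ℕ) (x : obj n), map OrderHom.id x = x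
  map_comp : ∀ {k m n : ℕ} (α : Fin (k + 1) →o Fin (m + 1)) (β : Fin (m + 1) →o Fin (n + 1))
      (x : obj n), map (β.comp α) x = map α (map β x)

/-- The order-preserving map `ρ_{ij} : [1] → [n]`, `0 ↦ i`, `1 ↦ j` (for `i ≤ j`). -/
def rho {n : ℕ} (i j : Fin (n + 1)) (h : i ≤ j) : Fin 2 →o Fin (n + 1) where
  toFun := ![i, j]
  monotone' := by
    intro a b hab
    fin_cases a <;> fin_cases b <;> simp_all

/-- The `k`-th edge `ρ_{k,k+1}^*(x)` of an `n`-simplex. -/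
def SSet'.edge (X : SSet') {n : ℕ} (x : X.obj n) (k : Fin n) : X.obj 1 :=
  X.map (rho k.castSucc k.succ (Fin.castSucc_lt_succ (i := k)).le) x

/-- A simplicial set is edgy if each simplex is determined by its string of edges. -/
def SSet'.IsEdgy (X : SSet') : Prop :=
  ∀ n : ℕ, 1 ≤ n → Function.Injective fun (x : X.obj n) (k : Fin n) => X.edge x k

/-- Conjugation of an order-preserving map by the flips `τ`. -/
def conj {m n : ℕ} (α : Fin (m + 1) →o Fin (n + 1)) : Fin (m + 1) →o Fin (n + 1) where
  toFun k := (α k.rev).rev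
  monotone' := by
    intro a b hab
    exact Fin.rev_le_rev.mpr (α.monotone (Fin.rev_le_rev.mpr hab))

/-- An anti-involution on a simplicial set `X`, i.e. a simplicial map
`ν : X^op → X` with `ν^op ∘ ν = id`, described levelwise.  Naturality of
`ν : X^op → X` amounts to `ν (X(τ∘α∘τ) x) = X(α) (ν x)`. -/
structure AntiInvolution (X : SSet') where
  app : ∀ n : ℕ, X.obj n → X.obj n
  naturality : ∀ {m n : ℕ} (α : Fin (m + 1) →o Fin (n + 1)) (x : X.obj n),
    app m (X.map (conj α) x) = X.map α (app n x)
  involutive : ∀ (n : ℕ) (x : X.obj n), app n (app n x) = x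

/-- The constant map `[1] → [n]` at the last vertex, i.e. `s_0 ∘ (d_0)^n`. -/
def lastConst (n : ℕ) : Fin 2 →o Fin (n + 1) := ⟨fun _ => Fin.last n, monotone_const⟩

/-- `LSpec X ν x y` says that `y ∈ X_{2n}` has the edge string
`[f_n† | ⋯ | f_1† | f_1 | ⋯ | f_n]`, where `[f_1 | ⋯ | f_n]` is the edge string of
`x ∈ X_n`, and that the total composite `ρ_{0,2n}^*(y)` is the identity
`s_0(d_0^n x)` on the last vertex of `x`. -/
def LSpec (X : SSet') (ν : AntiInvolution X) {n : ℕ} (x : X.obj n) (y : X.obj (n + n)) : Prop :=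
  (∀ k : Fin (n + n), X.edge y k =
      if h : (k : ℕ) < n then ν.app 1 (X.edge x ⟨n - 1 - (k : ℕ), by omega⟩)
      else X.edge x ⟨(k : ℕ) - n, by have := k.isLt; omega⟩) ∧
  X.map (rho 0 (Fin.last (n + n)) (Fin.zero_le _)) y = X.map (lastConst n) x

/-- A partial groupoid structure on a simplicial set: it is edgy, has an
anti-involution which is the identity on vertices, and has operators
`L : X_n → X_{2n}` with `L[f_1|⋯|f_n] = [f_n†|⋯|f_1†|f_1|⋯|f_n]` whose total
composite is an identity. -/
structure PartialGroupoidStruct (X : SSet') where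
  edgy : X.IsEdgy
  inv : AntiInvolution X
  inv_zero : ∀ x : X.obj 0, inv.app 0 x = x
  L : ∀ {n : ℕ}, X.obj n → X.obj (n + n)
  L_spec : ∀ {n : ℕ}, 1 ≤ n → ∀ x : X.obj n, LSpec X inv x (L x)

/-- The Prop-valued version: `X` together with the anti-involution `ν` is a
partial groupoid. -/
def IsPartialGroupoid (X : SSet') (ν : AntiInvolution X) : Prop :=
  X.IsEdgy ∧ (∀ v : X.obj 0, ν.app 0 v = v) ∧
    ∀ n : ℕ, 1 ≤ n → ∀ x : X.obj n, ∃ y : X.obj (n + n), LSpec X ν x y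

/-- The matrix form of an `n`-simplex: `x_{ij} = ρ_{ij}^*(x)` for `i ≤ j`, and
`x_{ji} = (x_{ij})†`. -/
def matrixForm (X : SSet') (ν : AntiInvolution X) {n : ℕ} (x : X.obj n) (i j : Fin (n + 1)) :
    X.obj 1 :=
  if h : i ≤ j then X.map (rho i j h) x
  else ν.app 1 (X.map (rho j i (le_of_not_ge h)) x)

/-- The fold map `χ_n : [2n] → [n]`, `i ↦ |n - i|`. -/
def chi (n : ℕ) (i : Fin (n + n + 1)) : Fin (n + 1) :=
  ⟨max n (i : ℕ) - min n (i : ℕ), by have := i.isLt; omega⟩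

/-- A map of simplicial sets. -/
structure SSetHom (X Y : SSet') where
  app : ∀ n : ℕ, X.obj n → Y.obj n
  naturality : ∀ {m n : ℕ} (α : Fin (m + 1) →o Fin (n + 1)) (x : X.obj n),
    app m (X.map α x) = Y.map α (app n x)

section Helpers

variable {X Y : SSet'}

lemma map_congr' {m n : ℕ} (α β : Fin (m + 1) →o Fin (n + 1)) (h : ∀ i, α i = β i)
    (x : X.obj n) : X.map α x = X.map β x := by
  have hh : α = β := by ext i; exact congrArg Fin.val (h i)
  rw [hh]

lemma map_map {k m n : ℕ} (α : Fin (k + 1) →o Fin (m + 1)) (β : Fin (m + 1) →o Fin (n + 1))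
    (x : X.obj n) : X.map α (X.map β x) = X.map (β.comp α) x := (X.map_comp α β x).symm

/-- Build an order hom from an explicit function. -/
def oh {m n : ℕ} (f : Fin (m + 1) → Fin (n + 1)) (h : Monotone f) :
    Fin (m + 1) →o Fin (n + 1) := ⟨f, h⟩

/-- The point inclusion `[0] → [n]` at `j`. -/
def pt {n : ℕ} (j : Fin (n + 1)) : Fin 1 →o Fin (n + 1) := ⟨fun _ => j, monotone_const⟩

/-- The unique map `[1] → [0]`. -/
def pii : Fin 2 →o Fin 1 := ⟨fun _ => 0, monotone_const⟩

lemma rho_map {m n : ℕ} (β : Fin (m + 1) →o Fin (n + 1)) (w : X.obj n) (a b : Fin (m + 1))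
    (hab : a ≤ b) (i j : Fin (n + 1)) (hij : i ≤ j) (h0 : β a = i) (h1 : β b = j) :
    X.map (rho a b hab) (X.map β w) = X.map (rho i j hij) w := by
  rw [map_map]
  refine map_congr' _ _ (fun t => ?_) w
  fin_cases t
  · exact h0
  · exact h1

lemma edge_eq_map {n : ℕ} (w : X.obj n) (k : Fin n) (i j : Fin (n + 1)) (hij : i ≤ j)
    (h0 : k.castSucc = i) (h1 : k.succ = j) :
    X.edge w k = X.map (rho i j hij) w := by
  subst h0; subst h1; rfl

lemma edge_map_eq {m n : ℕ} (β : Fin (m + 1) →o Fin (n + 1)) (w : X.obj n) (k : Fin m)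
    (l : Fin n) (h0 : β k.castSucc = l.castSucc) (h1 : β k.succ = l.succ) :
    X.edge (X.map β w) k = X.edge w l := by
  unfold SSet'.edge
  rw [map_map]
  refine map_congr' _ _ (fun t => ?_) w
  fin_cases t
  · exact h0
  · exact h1

lemma edge_self (f : X.obj 1) : X.edge f 0 = f := by
  rw [edge_eq_map f 0 0 1 (by decide) rfl rfl,
      map_congr' _ OrderHom.id (by intro t; fin_cases t <;> rfl) f, X.map_id]

lemma map_rho01 (f : X.obj 1) (h : (0 : Fin 2) ≤ 1) : X.map (rho 0 1 h) f = f := by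
  rw [map_congr' _ OrderHom.id (by intro t; fin_cases t <;> rfl) f, X.map_id]

lemma pt_map {m n : ℕ} (β : Fin (m + 1) →o Fin (n + 1)) (x : X.obj n) (t : Fin (m + 1))
    (j : Fin (n + 1)) (h : β t = j) : X.map (pt t) (X.map β x) = X.map (pt j) x := by
  rw [map_map]
  exact map_congr' _ _ (fun i => h) x

lemma const_edge {n : ℕ} (c : Fin 2 →o Fin (n + 1)) (j : Fin (n + 1)) (hc : ∀ i, c i = j)
    (x : X.obj n) : X.map c x = X.map pii (X.map (pt j) x) := by
  rw [map_map]
  exact map_congr' _ _ (fun i => hc i) x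

lemma inv_s0 (P : PartialGroupoidStruct X) (v : X.obj 0) :
    P.inv.app 1 (X.map pii v) = X.map pii v := by
  have h := P.inv.naturality pii v
  rw [map_congr' (conj pii) pii (fun i => (Fin.eq_zero _).trans (Fin.eq_zero _).symm) v] at h
  rw [h, P.inv_zero]

lemma edge_inv (ν : AntiInvolution X) {n : ℕ} (x : X.obj n) (k : Fin n) :
    X.edge (ν.app n x) k = ν.app 1 (X.edge x k.rev) := by
  unfold SSet'.edge
  rw [← ν.naturality]
  congr 1
  refine map_congr' _ _ (fun i => ?_) x
  fin_cases i
  · show (k.succ).rev = (k.rev).castSucc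
    exact Fin.rev_succ k
  · show (k.castSucc).rev = (k.rev).succ
    exact Fin.rev_castSucc k

lemma edge_hom {X Y : SSet'} (F : SSetHom X Y) {n : ℕ} (x : X.obj n) (k : Fin n) :
    Y.edge (F.app n x) k = F.app 1 (X.edge x k) := (F.naturality _ x).symm

lemma edgy_ext {n : ℕ} (P : PartialGroupoidStruct X) (hn : 1 ≤ n) {x y : X.obj n}
    (h : ∀ k, X.edge x k = X.edge y k) : x = y := P.edgy n hn (funext h)

end Helpers

section Main

variable {X Y : SSet'}

/-- Key lemma: in a partial groupoid, a 2-simplex whose long edge is the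
degenerate edge on the last vertex has first edge the dagger of its second edge. -/
lemma inv_unique_edge (P : PartialGroupoidStruct Y) (z : Y.obj 2)
    (hlong : Y.map (rho 0 2 (by decide)) z = Y.map (lastConst 1) (Y.edge z 1)) :
    Y.edge z 0 = P.inv.app 1 (Y.edge z 1) := by
  obtain ⟨hedges, -⟩ := P.L_spec (by norm_num : 1 ≤ 2) z
  -- the simplex w = L z : Y.obj 4 with edge string [f†, g†, g, f]
  have he0 : Y.edge (P.L z) 0 = P.inv.app 1 (Y.edge z 1) := by
    have h := hedges 0; rw [dif_pos (by decide)] at h; exact h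
  have he1 : Y.edge (P.L z) 1 = P.inv.app 1 (Y.edge z 0) := by
    have h := hedges 1; rw [dif_pos (by decide)] at h; exact h
  have he2 : Y.edge (P.L z) 2 = Y.edge z 0 := by
    have h := hedges 2; rw [dif_neg (by decide)] at h; exact h
  have he3 : Y.edge (P.L z) 3 = Y.edge z 1 := by
    have h := hedges 3; rw [dif_neg (by decide)] at h; exact h
  -- edges of L g for the 1-simplex g = edge z 0
  have hLg0 : Y.edge (P.L (Y.edge z 0)) 0 = P.inv.app 1 (Y.edge z 0) := by
    have h := (P.L_spec le_rfl (Y.edge z 0)).1 0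
    rw [dif_pos (by decide)] at h
    exact h.trans (congrArg _ (edge_self _))
  have hLg1 : Y.edge (P.L (Y.edge z 0)) 1 = Y.edge z 0 := by
    have h := (P.L_spec le_rfl (Y.edge z 0)).1 1
    rw [dif_neg (by decide)] at h
    exact h.trans (edge_self _)
  have hLgT : Y.map (rho 0 (Fin.last 2) (Fin.zero_le _)) (P.L (Y.edge z 0))
      = Y.map (lastConst 1) (Y.edge z 0) := (P.L_spec le_rfl (Y.edge z 0)).2
  -- vertex equality v0 z = v2 z  (from hlong)
  have hv02 : Y.map (pt 0) z = Y.map (pt 2) z := by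
    have h0 := congrArg (Y.map (pt 0)) hlong
    rw [pt_map _ z 0 0 rfl, pt_map _ (Y.edge z 1) 0 (Fin.last 1) rfl] at h0
    rw [h0, edge_eq_map z 1 1 2 (by decide) (by decide) (by decide),
        pt_map _ z (Fin.last 1) 2 (by decide)]
  -- Step B: the face {1,2,3} of L z is L g
  have hface123 : Y.map (oh ![1,2,3] (by decide)) (P.L z) = P.L (Y.edge z 0) := by
    refine edgy_ext P (by norm_num) (fun k => ?_)
    fin_cases k
    · exact (edge_map_eq _ _ _ 1 (by decide) (by decide)).trans (he1.trans hLg0.symm)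
    · exact (edge_map_eq _ _ _ 2 (by decide) (by decide)).trans (he2.trans hLg1.symm)
  have hB : Y.map (rho 1 3 (by decide)) (P.L z) = Y.map (lastConst 1) (Y.edge z 0) := by
    have hcong := congrArg (Y.map (rho (0:Fin 3) (Fin.last 2) (Fin.zero_le _))) hface123
    rw [rho_map _ (P.L z) 0 (Fin.last 2) (Fin.zero_le _) 1 3 (by decide) (by decide)
        (by decide)] at hcong
    exact hcong.trans hLgT
  -- the degenerate edge at the target of f† agrees with that of g
  have hcf : Y.map (lastConst 1) (P.inv.app 1 (Y.edge z 1)) = Y.map (lastConst 1) (Y.edge z 0) := by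
    have h1 : P.inv.app 1 (Y.map (conj (lastConst 1)) (Y.edge z 1))
        = Y.map (lastConst 1) (P.inv.app 1 (Y.edge z 1)) := P.inv.naturality (lastConst 1) _
    rw [const_edge (conj (lastConst 1)) 0 (by decide) _, inv_s0] at h1
    rw [← h1, const_edge (lastConst 1) 1 (fun i => rfl) _]
    congr 1
    rw [edge_eq_map z 1 1 2 (by decide) (by decide) (by decide),
        edge_eq_map z 0 0 1 (by decide) (by decide) (by decide),
        pt_map _ z 0 1 (by decide), pt_map _ z 1 1 (by decide)]
  -- Step C: face {0,1,3} of L z is the degeneracy s₁(f†), hence ρ₀₃(L z) = f†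
  have hface013 : Y.map (oh ![0,1,3] (by decide)) (P.L z)
      = Y.map (oh ![0,1,1] (by decide)) (P.inv.app 1 (Y.edge z 1)) := by
    refine edgy_ext P (by norm_num) (fun k => ?_)
    fin_cases k
    · refine (edge_map_eq _ _ _ 0 (by decide) (by decide)).trans (he0.trans ?_)
      exact ((edge_map_eq (oh ![0,1,1] (by decide)) _ _ 0 (by decide) (by decide)).trans
        (edge_self _)).symm
    · refine (edge_eq_map _ _ 1 2 (by decide) (by decide) (by decide)).trans ?_
      rw [rho_map _ (P.L z) 1 2 (by decide) 1 3 (by decide) (by decide) (by decide), hB]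
      refine Eq.symm ?_
      refine (edge_eq_map _ _ 1 2 (by decide) (by decide) (by decide)).trans ?_
      rw [rho_map _ (P.inv.app 1 (Y.edge z 1)) 1 2 (by decide) 1 1 le_rfl (by decide) (by decide)]
      rw [map_congr' (rho 1 1 le_rfl) (lastConst 1) (by decide) _]
      exact hcf
  have hC : Y.map (rho (0:Fin 5) 3 (by decide)) (P.L z) = P.inv.app 1 (Y.edge z 1) := by
    have hcong := congrArg (Y.map (rho (0:Fin 3) 2 (by decide))) hface013
    rw [rho_map _ (P.L z) 0 2 (by decide) 0 3 (by decide) (by decide) (by decide),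
        rho_map _ (P.inv.app 1 (Y.edge z 1)) 0 2 (by decide) 0 1 (by decide) (by decide)
          (by decide), map_rho01] at hcong
    exact hcong
  -- Step D: face {0,1,2} of L z is ν z, so ρ₀₂(L z) is degenerate
  have hface012 : Y.map (oh ![0,1,2] (by decide)) (P.L z) = P.inv.app 2 z := by
    refine edgy_ext P (by norm_num) (fun k => ?_)
    fin_cases k
    · exact (edge_map_eq _ _ _ 0 (by decide) (by decide)).trans
        (he0.trans (edge_inv P.inv z 0).symm)
    · exact (edge_map_eq _ _ _ 1 (by decide) (by decide)).trans
        (he1.trans (edge_inv P.inv z 1).symm)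
  have hD0 : Y.map (rho (0:Fin 5) 2 (by decide)) (P.L z)
      = Y.map pii (Y.map (pt 1) (Y.edge z 1)) := by
    have hcong := congrArg (Y.map (rho (0:Fin 3) 2 (by decide))) hface012
    rw [rho_map _ (P.L z) 0 2 (by decide) 0 2 (by decide) (by decide) (by decide)] at hcong
    have hnat : Y.map (rho (0:Fin 3) 2 (by decide)) (P.inv.app 2 z)
        = P.inv.app 1 (Y.map (rho (0:Fin 3) 2 (by decide)) z) := by
      rw [← P.inv.naturality]
      exact congrArg _ (map_congr' _ _ (by decide) z)
    rw [hcong, hnat, hlong, const_edge (lastConst 1) 1 (fun i => rfl) _, inv_s0]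
  -- face {0,2,3} of L z is the degeneracy s₀(g), hence ρ₀₃(L z) = g
  have hface023 : Y.map (oh ![0,2,3] (by decide)) (P.L z)
      = Y.map (oh ![0,0,1] (by decide)) (Y.edge z 0) := by
    refine edgy_ext P (by norm_num) (fun k => ?_)
    fin_cases k
    · refine (edge_eq_map _ _ 0 1 (by decide) (by decide) (by decide)).trans ?_
      rw [rho_map _ (P.L z) 0 1 (by decide) 0 2 (by decide) (by decide) (by decide), hD0]
      refine Eq.symm ?_
      refine (edge_eq_map _ _ 0 1 (by decide) (by decide) (by decide)).trans ?_
      rw [rho_map _ (Y.edge z 0) 0 1 (by decide) 0 0 le_rfl (by decide) (by decide),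
          const_edge (rho 0 0 le_rfl) 0 (by decide) _]
      congr 1
      rw [edge_eq_map z 1 1 2 (by decide) (by decide) (by decide),
          edge_eq_map z 0 0 1 (by decide) (by decide) (by decide),
          pt_map _ z 1 2 (by decide), pt_map _ z 0 0 (by decide)]
      exact hv02
    · refine (edge_map_eq _ _ _ 2 (by decide) (by decide)).trans (he2.trans ?_)
      exact ((edge_map_eq (oh ![0,0,1] (by decide)) _ _ 0 (by decide) (by decide)).trans
        (edge_self _)).symm
  have hD : Y.map (rho (0:Fin 5) 3 (by decide)) (P.L z) = Y.edge z 0 := by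
    have hcong := congrArg (Y.map (rho (0:Fin 3) 2 (by decide))) hface023
    rw [rho_map _ (P.L z) 0 2 (by decide) 0 3 (by decide) (by decide) (by decide),
        rho_map _ (Y.edge z 0) 0 2 (by decide) 0 1 (by decide) (by decide) (by decide),
        map_rho01] at hcong
    exact hcong
  exact hD.symm.trans hC

/-- Compatibility in dimension 1. -/
lemma compat_one (PX : PartialGroupoidStruct X) (PY : PartialGroupoidStruct Y)
    (F : SSetHom X Y) (f : X.obj 1) :
    F.app 1 (PX.inv.app 1 f) = PY.inv.app 1 (F.app 1 f) := by
  obtain ⟨hedges, htot⟩ := PX.L_spec le_rfl f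
  have hz0 : X.edge (PX.L f) 0 = PX.inv.app 1 f := by
    have h := hedges 0; rw [dif_pos (by decide)] at h
    exact h.trans (congrArg _ (edge_self _))
  have hz1 : X.edge (PX.L f) 1 = f := by
    have h := hedges 1; rw [dif_neg (by decide)] at h
    exact h.trans (edge_self _)
  have hFlong : Y.map (rho 0 2 (by decide)) (F.app 2 (PX.L f))
      = Y.map (lastConst 1) (Y.edge (F.app 2 (PX.L f)) 1) := by
    have h := congrArg (F.app 1) htot
    rw [F.naturality, F.naturality] at h
    rw [edge_hom F (PX.L f) 1, hz1]
    exact (map_congr' _ _ (fun i => rfl) _).trans h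
  have key := inv_unique_edge PY (F.app 2 (PX.L f)) hFlong
  rw [edge_hom F (PX.L f) 0, hz0, edge_hom F (PX.L f) 1, hz1] at key
  exact key

/-- Compatibility in every dimension. -/
lemma compat_all (PX : PartialGroupoidStruct X) (PY : PartialGroupoidStruct Y)
    (F : SSetHom X Y) (n : ℕ) (x : X.obj n) :
    F.app n (PX.inv.app n x) = PY.inv.app n (F.app n x) := by
  match n with
  | 0 => rw [PX.inv_zero, PY.inv_zero]
  | Nat.succ m =>
    refine edgy_ext PY (Nat.succ_le_succ (Nat.zero_le m)) (fun k => ?_)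
    rw [edge_hom F _ k, edge_inv PX.inv x k, edge_inv PY.inv (F.app (m+1) x) k,
        compat_one PX PY F, edge_hom F x k.rev]

/-- The identity simplicial map. -/
def idHom (X : SSet') : SSetHom X X := ⟨fun _ x => x, fun _ _ => rfl⟩

end Main

/-- If `X` and `Y` are partial groupoids with anti-involutions
`ν`, `ν′`, and `F : X → Y` is any map of simplicial sets, then `F ∘ ν = ν′ ∘ F^op`
(levelwise, `F_n ∘ ν_n = ν′_n ∘ F_n`); in particular a simplicial set admits at
most one anti-involution making it a partial groupoid. -/
theorem inv_compat_automatic (X Y : SSet') (PX : PartialGroupoidStruct X)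
    (PY : PartialGroupoidStruct Y) (F : SSetHom X Y) :
    (∀ (n : ℕ) (x : X.obj n), F.app n (PX.inv.app n x) = PY.inv.app n (F.app n x)) ∧
    (∀ (P Q : PartialGroupoidStruct X) (n : ℕ) (x : X.obj n),
      P.inv.app n x = Q.inv.app n x) := by
  constructor
  · exact fun n x => compat_all PX PY F n x
  · exact fun P Q n x => compat_all P Q (idHom X) n x
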